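/- For a family 𝒯 of complete L-theories: (1) 𝒯 is 0-minimal if and only if 𝒯 is a singleton; (2) 𝒯 is 1-minimal if and only if 𝒯 is infinite and e-minimal; (3) 𝒯 is 2-minimal if and only if 𝒯 is a-minimal; (4) for any ordinal α, 𝒯 is α-minimal if and only if RS(𝒯) = α and ds(𝒯) = 1. -/

import Mathlib

open FirstOrder Language Cardinal Set

universe u v w

variable {L : FirstOrder.Language.{u, v}}

/-- A complete theory: a satisfiable set of sentences containing each sentence or its
negation (`Theory.IsMaximal` in Mathlib). -/
abbrev CTheory (L : FirstOrder.Language.{u, v}) : Type max u v :=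
  {T : L.Theory // T.IsMaximal}

/-- The neighbourhood `𝒯_φ = {T ∈ 𝒯 | φ ∈ T}`. -/
def nbhd (𝒯 : Set (CTheory L)) (φ : L.Sentence) : Set (CTheory L) :=
  {T | T ∈ 𝒯 ∧ φ ∈ T.1}

/-- `T` is an accumulation point of `𝒯` if for every sentence `φ ∈ T` the set `𝒯_φ` is
infinite. -/
def IsAccPoint (𝒯 : Set (CTheory L)) (T : CTheory L) : Prop :=
  ∀ φ : L.Sentence, φ ∈ T.1 → (nbhd 𝒯 φ).Infinite

/-- The `E`-closure of `𝒯`: `𝒯` together with all its accumulation points. -/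
def ClE (𝒯 : Set (CTheory L)) : Set (CTheory L) :=
  𝒯 ∪ {T | IsAccPoint 𝒯 T}

/-- The `e`-spectrum of `𝒯`: the cardinality of the set of accumulation points of `𝒯`. -/
noncomputable def eSp (𝒯 : Set (CTheory L)) : Cardinal :=
  Cardinal.mk {T : CTheory L // IsAccPoint 𝒯 T}

/-- Two sentences are inconsistent if `{φ, ψ}` is unsatisfiable. -/
def Inconsistent (φ ψ : L.Sentence) : Prop :=
  ¬ FirstOrder.Language.Theory.IsSatisfiable ({φ, ψ} : L.Theory)

open Classical in
/-- `RSge α 𝒯` says `RS(𝒯) ≥ α`: `RS(𝒯) ≥ 0` iff `𝒯 ≠ ∅`; `RS(𝒯) ≥ 1` iff `𝒯` is infinite;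
for `β ≥ 1`, `RS(𝒯) ≥ β + 1` iff there are pairwise inconsistent sentences `φ_n`, `n ∈ ℕ`,
with `RS(𝒯_{φ_n}) ≥ β` for all `n`; for limit `λ`, `RS(𝒯) ≥ λ` iff `RS(𝒯) ≥ β` for all
`β < λ`. -/
noncomputable def RSge (α : Ordinal.{w}) : Set (CTheory L) → Prop :=
  @Ordinal.limitRecOn (fun _ => Set (CTheory L) → Prop) α
    (fun 𝒯 => 𝒯.Nonempty)
    (fun β ih 𝒯 =>
      if β = 0 then 𝒯.Infinite
      else ∃ φ : ℕ → L.Sentence,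
        (∀ m n : ℕ, m ≠ n → Inconsistent (φ m) (φ n)) ∧ ∀ k : ℕ, ih (nbhd 𝒯 (φ k)))
    (fun β _ ih 𝒯 => ∀ γ : Ordinal, ∀ h : γ < β, ih γ h 𝒯)

/-- `RS(𝒯) = α` for an ordinal `α`: `RS(𝒯) ≥ α` but not `RS(𝒯) ≥ α + 1`. -/
def RSeq (𝒯 : Set (CTheory L)) (α : Ordinal.{w}) : Prop :=
  RSge α 𝒯 ∧ ¬ RSge (α + 1) 𝒯

/-- `RS(𝒯) = ∞`: `RS(𝒯) ≥ α` for every ordinal `α`. -/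
def RSinf (𝒯 : Set (CTheory L)) : Prop :=
  ∀ α : Ordinal.{w}, RSge α 𝒯

/-- `ds(𝒯) = n` (relative to `RS(𝒯) = α`): `n` is the largest natural number for which
there exist `n` pairwise inconsistent sentences `φ_1, …, φ_n` with `RS(𝒯_{φ_i}) = α`. -/
def dsEq (𝒯 : Set (CTheory L)) (α : Ordinal.{w}) (n : ℕ) : Prop :=
  IsGreatest {m : ℕ | ∃ φ : Fin m → L.Sentence,
    (∀ i j : Fin m, i ≠ j → Inconsistent (φ i) (φ j)) ∧
    ∀ i : Fin m, RSeq (nbhd 𝒯 (φ i)) α} n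

/-- `𝒯` is `e`-minimal: for every sentence `φ`, `𝒯_φ` is finite or `𝒯_{¬φ}` is finite. -/
def EMinimal (𝒯 : Set (CTheory L)) : Prop :=
  ∀ φ : L.Sentence, (nbhd 𝒯 φ).Finite ∨ (nbhd 𝒯 φ.not).Finite

/-- `𝒯` is `a`-minimal: `𝒯` has infinitely many accumulation points and for every sentence
`φ`, `𝒯_φ` or `𝒯_{¬φ}` has only finitely many accumulation points. -/
def AMinimal (𝒯 : Set (CTheory L)) : Prop :=
  {T : CTheory L | IsAccPoint 𝒯 T}.Infinite ∧
  ∀ φ : L.Sentence,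
    {T : CTheory L | IsAccPoint (nbhd 𝒯 φ) T}.Finite ∨
    {T : CTheory L | IsAccPoint (nbhd 𝒯 φ.not) T}.Finite

/-- `𝒯` is `α`-minimal: `RS(𝒯) = α` and for every sentence `φ`, `RS(𝒯_φ) < α` or
`RS(𝒯_{¬φ}) < α`. -/
def AlphaMinimal (𝒯 : Set (CTheory L)) (α : Ordinal.{w}) : Prop :=
  RSeq 𝒯 α ∧
  ∀ φ : L.Sentence, ¬ RSge α (nbhd 𝒯 φ) ∨ ¬ RSge α (nbhd 𝒯 φ.not)

/-! ### Auxiliary lemmas -/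

section Aux

variable {𝒜 ℬ 𝒯' : Set (CTheory L)} {φ ψ : L.Sentence}

lemma CTheory.mem_iff_realize (T : CTheory L) (M : T.1.ModelType) (φ : L.Sentence) :
    φ ∈ T.1 ↔ M ⊨ φ := by
  refine ⟨fun h => T.1.realize_sentence_of_mem h, fun h => ?_⟩
  rcases T.2.2 φ with h' | h'
  · exact h'
  · exact absurd ((Sentence.realize_not M).1 (T.1.realize_sentence_of_mem h')) (fun hn => hn h)

lemma CTheory.not_mem_both (T : CTheory L) (φ : L.Sentence) : ¬(φ ∈ T.1 ∧ φ.not ∈ T.1) := by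
  rintro ⟨h1, h2⟩
  obtain ⟨M⟩ := T.2.1
  exact (Sentence.realize_not M).1 (T.1.realize_sentence_of_mem h2)
    (T.1.realize_sentence_of_mem h1)

lemma CTheory.mem_top (T : CTheory L) : (⊤ : L.Sentence) ∈ T.1 := by
  obtain ⟨M⟩ := T.2.1
  rw [CTheory.mem_iff_realize T M]
  exact Formula.realize_top.2 trivial

lemma CTheory.mem_inf_iff (T : CTheory L) (φ ψ : L.Sentence) :
    φ ⊓ ψ ∈ T.1 ↔ φ ∈ T.1 ∧ ψ ∈ T.1 := by
  obtain ⟨M⟩ := T.2.1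
  rw [CTheory.mem_iff_realize T M, CTheory.mem_iff_realize T M, CTheory.mem_iff_realize T M]
  exact Formula.realize_inf

lemma inconsistent_of_forall
    (h : ∀ T : CTheory L, ¬(φ ∈ T.1 ∧ ψ ∈ T.1)) : Inconsistent φ ψ := by
  rintro ⟨M⟩
  refine h ⟨L.completeTheory M, completeTheory.isMaximal L M⟩ ⟨?_, ?_⟩
  · exact mem_completeTheory.2 (Theory.realize_sentence_of_mem _ (by simp : φ ∈ ({φ, ψ} : L.Theory)))
  · exact mem_completeTheory.2 (Theory.realize_sentence_of_mem _ (by simp : ψ ∈ ({φ, ψ} : L.Theory)))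

lemma inconsistent_symm (h : Inconsistent φ ψ) : Inconsistent ψ φ := by
  rw [Inconsistent, Set.pair_comm]; exact h

lemma inconsistent_not_self (φ : L.Sentence) : Inconsistent φ φ.not :=
  inconsistent_of_forall fun T => CTheory.not_mem_both T φ

lemma mem_not_of_inconsistent (h : Inconsistent φ ψ) (T : CTheory L)
    (hψ : ψ ∈ T.1) : φ.not ∈ T.1 := by
  rcases T.2.2 φ with h' | h'
  · exfalso
    apply h
    apply T.2.1.mono
    intro x hx
    simp only [Set.mem_insert_iff, Set.mem_singleton_iff] at hx
    rcases hx with rfl | rfl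
    · exact h'
    · exact hψ
  · exact h'

lemma nbhd_mono (h : 𝒜 ⊆ ℬ) (φ : L.Sentence) : nbhd 𝒜 φ ⊆ nbhd ℬ φ :=
  fun T hT => ⟨h hT.1, hT.2⟩

lemma nbhd_subset (𝒜 : Set (CTheory L)) (φ : L.Sentence) : nbhd 𝒜 φ ⊆ 𝒜 :=
  fun _ hT => hT.1

lemma nbhd_top (𝒜 : Set (CTheory L)) : nbhd 𝒜 (⊤ : L.Sentence) = 𝒜 :=
  Set.ext fun T => ⟨fun h => h.1, fun h => ⟨h, CTheory.mem_top T⟩⟩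

lemma RSge_zero (𝒯 : Set (CTheory L)) : RSge (0 : Ordinal.{w}) 𝒯 ↔ 𝒯.Nonempty := by
  unfold RSge; rw [Ordinal.limitRecOn_zero]

open Classical in
lemma RSge_succ (β : Ordinal.{w}) (𝒯 : Set (CTheory L)) :
    RSge (Order.succ β) 𝒯 ↔ (if β = 0 then 𝒯.Infinite
      else ∃ φ : ℕ → L.Sentence,
        (∀ m n : ℕ, m ≠ n → Inconsistent (φ m) (φ n)) ∧ ∀ k : ℕ, RSge β (nbhd 𝒯 (φ k))) := by
  unfold RSge; rw [Ordinal.limitRecOn_succ]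

lemma RSge_limit {β : Ordinal.{w}} (hβ : Order.IsSuccLimit β) (𝒯 : Set (CTheory L)) :
    RSge β 𝒯 ↔ ∀ γ < β, RSge γ 𝒯 := by
  unfold RSge; rw [Ordinal.limitRecOn_limit _ _ _ _ hβ]

lemma RSge_one (𝒯 : Set (CTheory L)) : RSge (1 : Ordinal.{w}) 𝒯 ↔ 𝒯.Infinite := by
  have h := RSge_succ (0 : Ordinal.{w}) 𝒯
  rw [Ordinal.succ_zero, if_pos rfl] at h
  exact h

lemma RSge_succ_of_ne {β : Ordinal.{w}} (hβ : β ≠ 0) (𝒯 : Set (CTheory L)) :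
    RSge (β + 1) 𝒯 ↔ ∃ φ : ℕ → L.Sentence,
      (∀ m n : ℕ, m ≠ n → Inconsistent (φ m) (φ n)) ∧ ∀ k : ℕ, RSge β (nbhd 𝒯 (φ k)) := by
  rw [Ordinal.add_one_eq_succ, RSge_succ, if_neg hβ]

lemma RSge_two (𝒯 : Set (CTheory L)) :
    RSge (2 : Ordinal.{w}) 𝒯 ↔ ∃ φ : ℕ → L.Sentence,
      (∀ m n : ℕ, m ≠ n → Inconsistent (φ m) (φ n)) ∧ ∀ k : ℕ, (nbhd 𝒯 (φ k)).Infinite := by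
  have h := RSge_succ_of_ne (one_ne_zero : (1 : Ordinal.{w}) ≠ 0) 𝒯
  rw [one_add_one_eq_two] at h
  rw [h]
  exact exists_congr fun φ => and_congr_right fun _ => forall_congr' fun k => RSge_one _

lemma RSge_mono (α : Ordinal.{w}) : ∀ {𝒜 ℬ : Set (CTheory L)}, 𝒜 ⊆ ℬ → RSge α 𝒜 → RSge α ℬ := by
  induction α using Ordinal.limitRecOn with
  | zero => intro 𝒜 ℬ h ha; rw [RSge_zero] at *; exact ha.mono h
  | add_one β ih =>
    intro 𝒜 ℬ h ha
    rw [Ordinal.add_one_eq_succ, RSge_succ] at *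
    split_ifs at * with hb
    · exact ha.mono h
    · obtain ⟨φ, hinc, hk⟩ := ha
      exact ⟨φ, hinc, fun k => ih (nbhd_mono h _) (hk k)⟩
  | limit β hl ih =>
    intro 𝒜 ℬ h ha
    rw [RSge_limit hl] at *
    exact fun γ hγ => ih γ hγ h (ha γ hγ)

lemma not_RSge_succ {β : Ordinal.{w}} (hβ : β ≠ 0) {𝒯 : Set (CTheory L)}
    (hcond : ∀ φ : L.Sentence, ¬RSge β (nbhd 𝒯 φ) ∨ ¬RSge β (nbhd 𝒯 φ.not)) :
    ¬ RSge (β + 1) 𝒯 := by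
  rw [RSge_succ_of_ne hβ]
  rintro ⟨φ, hinc, hk⟩
  rcases hcond (φ 0) with h | h
  · exact h (hk 0)
  · refine h (RSge_mono β ?_ (hk 1))
    intro T hT
    exact ⟨hT.1, mem_not_of_inconsistent (hinc 0 1 (by norm_num)) T hT.2⟩

/-! ### Accumulation points and `RS ≥ 2` -/

lemma exists_accPoint (𝒜 : Set (CTheory L)) {φ : L.Sentence} (h : (nbhd 𝒜 φ).Infinite) :
    ∃ T : CTheory L, IsAccPoint 𝒜 T ∧ φ ∈ T.1 := by
  haveI : Infinite ↥(nbhd 𝒜 φ) := h.to_subtype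
  let U : Ultrafilter ↥(nbhd 𝒜 φ) := Ultrafilter.of Filter.cofinite
  have hU : ∀ s ∈ (Filter.cofinite : Filter ↥(nbhd 𝒜 φ)), s ∈ U :=
    fun s hs => Ultrafilter.of_le Filter.cofinite hs
  have hUinf : ∀ s : Set ↥(nbhd 𝒜 φ), s ∈ U → s.Infinite := by
    intro s hs
    by_contra hfin
    rw [Set.not_infinite] at hfin
    exact Ultrafilter.compl_mem_iff_notMem.1 (hU _ (Set.Finite.compl_mem_cofinite hfin)) hs
  have hmax : Theory.IsMaximal {ψ : L.Sentence | {x : ↥(nbhd 𝒜 φ) | ψ ∈ x.1.1} ∈ U} := by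
    constructor
    · rw [Theory.isSatisfiable_iff_isFinitelySatisfiable]
      intro T0 hT0
      have hInt : (⋂ ψ ∈ T0, {x : ↥(nbhd 𝒜 φ) | ψ ∈ x.1.1}) ∈ U :=
        (Filter.biInter_finset_mem T0).2 fun ψ hψ => hT0 hψ
      obtain ⟨x, hx⟩ := U.nonempty_of_mem hInt
      refine (x.1.2.1).mono ?_
      intro ψ hψ
      simpa using (Set.mem_iInter₂.1 hx) ψ (by simpa using hψ)
    · intro ψ
      rcases U.mem_or_compl_mem {x : ↥(nbhd 𝒜 φ) | ψ ∈ x.1.1} with h' | h'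
      · exact Or.inl h'
      · refine Or.inr (Filter.mem_of_superset h' ?_)
        intro x hx
        exact (x.1.2.2 ψ).resolve_left hx
  refine ⟨⟨_, hmax⟩, ?_, ?_⟩
  · intro ψ hψ
    have hinf : ({x : ↥(nbhd 𝒜 φ) | ψ ∈ x.1.1}).Infinite := hUinf _ hψ
    have : ((fun x : ↥(nbhd 𝒜 φ) => x.1) '' {x | ψ ∈ x.1.1}).Infinite :=
      hinf.image (fun x _ y _ hxy => Subtype.val_injective hxy)
    refine this.mono ?_
    rintro _ ⟨x, hx, rfl⟩
    exact ⟨x.2.1, hx⟩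
  · show {x : ↥(nbhd 𝒜 φ) | φ ∈ x.1.1} ∈ U
    refine Filter.mem_of_superset Filter.univ_mem ?_
    intro x _
    exact x.2.2

lemma acc_infinite_of_RSge_two (h : RSge (2 : Ordinal.{w}) 𝒜) :
    {T : CTheory L | IsAccPoint 𝒜 T}.Infinite := by
  rw [RSge_two] at h
  obtain ⟨φ, hinc, hk⟩ := h
  choose T hT hmem using fun k => exists_accPoint 𝒜 (hk k)
  refine Set.infinite_of_injective_forall_mem (f := T) ?_ hT
  intro m n hmn
  by_contra hne
  refine hinc m n hne (Theory.IsSatisfiable.mono (T m).2.1 ?_)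
  intro x hx
  simp only [Set.mem_insert_iff, Set.mem_singleton_iff] at hx
  rcases hx with rfl | rfl
  · exact hmem m
  · rw [hmn]
    exact hmem n

/-! ### From infinitely many accumulation points to `RS ≥ 2` -/

lemma acc_step (𝒜 : Set (CTheory L)) (ψ : L.Sentence)
    (h : {T : CTheory L | IsAccPoint 𝒜 T ∧ ψ ∈ T.1}.Infinite) :
    ∃ p : L.Sentence × L.Sentence,
      {T : CTheory L | IsAccPoint 𝒜 T ∧ p.1 ∈ T.1}.Infinite ∧
      (∃ T : CTheory L, IsAccPoint 𝒜 T ∧ p.2 ∈ T.1) ∧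
      (∀ T : CTheory L, p.1 ∈ T.1 → ψ ∈ T.1) ∧
      (∀ T : CTheory L, p.2 ∈ T.1 → ψ ∈ T.1) ∧
      (∀ T : CTheory L, ¬(p.2 ∈ T.1 ∧ p.1 ∈ T.1)) := by
  obtain ⟨T1, hT1, T2, hT2, hne12⟩ := h.nontrivial
  -- a sentence χ with χ in some element and χ.not in some element of the set
  have key : ∃ χ : L.Sentence,
      (∃ T : CTheory L, (IsAccPoint 𝒜 T ∧ ψ ∈ T.1) ∧ χ ∈ T.1) ∧
      (∃ T : CTheory L, (IsAccPoint 𝒜 T ∧ ψ ∈ T.1) ∧ χ.not ∈ T.1) := by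
    have hne : ¬ (T1.1 = T2.1) := fun e => hne12 (Subtype.ext e)
    obtain ⟨χ, hχ⟩ := not_forall.1 (fun hall => hne (Set.ext fun χ => (hall χ)))
    rcases Classical.em (χ ∈ T1.1) with h1 | h1
    · have h2 : χ ∉ T2.1 := fun h2 => hχ ⟨fun _ => h2, fun _ => h1⟩
      exact ⟨χ, ⟨T1, hT1, h1⟩, ⟨T2, hT2, (T2.2.2 χ).resolve_left h2⟩⟩
    · have h2 : χ ∈ T2.1 := by
        by_contra h2
        exact hχ ⟨fun h => absurd h h1, fun h => absurd h h2⟩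
      exact ⟨χ, ⟨T2, hT2, h2⟩, ⟨T1, hT1, (T1.2.2 χ).resolve_left h1⟩⟩
  obtain ⟨χ, ⟨Ta, hTa, hχa⟩, ⟨Tb, hTb, hχb⟩⟩ := key
  -- split the set by χ
  have hsplit : {T : CTheory L | IsAccPoint 𝒜 T ∧ ψ ∈ T.1} ⊆
      {T : CTheory L | IsAccPoint 𝒜 T ∧ ψ ⊓ χ ∈ T.1} ∪
      {T : CTheory L | IsAccPoint 𝒜 T ∧ ψ ⊓ χ.not ∈ T.1} := by
    intro T hT
    rcases T.2.2 χ with hc | hc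
    · exact Or.inl ⟨hT.1, (CTheory.mem_inf_iff T ψ χ).2 ⟨hT.2, hc⟩⟩
    · exact Or.inr ⟨hT.1, (CTheory.mem_inf_iff T ψ χ.not).2 ⟨hT.2, hc⟩⟩
  have hcases := (Set.infinite_union).1 (h.mono hsplit)
  have haux : ∀ σ τ : L.Sentence,
      (∀ T : CTheory L, ¬(τ ∈ T.1 ∧ σ ∈ T.1)) →
      {T : CTheory L | IsAccPoint 𝒜 T ∧ ψ ⊓ σ ∈ T.1}.Infinite →
      (∃ T : CTheory L, (IsAccPoint 𝒜 T ∧ ψ ∈ T.1) ∧ τ ∈ T.1) →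
      ∃ p : L.Sentence × L.Sentence,
        {T : CTheory L | IsAccPoint 𝒜 T ∧ p.1 ∈ T.1}.Infinite ∧
        (∃ T : CTheory L, IsAccPoint 𝒜 T ∧ p.2 ∈ T.1) ∧
        (∀ T : CTheory L, p.1 ∈ T.1 → ψ ∈ T.1) ∧
        (∀ T : CTheory L, p.2 ∈ T.1 → ψ ∈ T.1) ∧
        (∀ T : CTheory L, ¬(p.2 ∈ T.1 ∧ p.1 ∈ T.1)) := by
    rintro σ τ hστ hinf ⟨T, hT, hτ⟩
    refine ⟨⟨ψ ⊓ σ, ψ ⊓ τ⟩, hinf, ⟨T, hT.1, (CTheory.mem_inf_iff T ψ τ).2 ⟨hT.2, hτ⟩⟩,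
      fun T' h' => ((CTheory.mem_inf_iff T' ψ σ).1 h').1,
      fun T' h' => ((CTheory.mem_inf_iff T' ψ τ).1 h').1, ?_⟩
    rintro T' ⟨h1, h2⟩
    exact hστ T' ⟨((CTheory.mem_inf_iff T' ψ τ).1 h1).2, ((CTheory.mem_inf_iff T' ψ σ).1 h2).2⟩
  rcases hcases with hinf | hinf
  · exact haux χ χ.not (fun T' h' => CTheory.not_mem_both T' χ ⟨h'.2, h'.1⟩) hinf ⟨Tb, hTb, hχb⟩
  · exact haux χ.not χ (fun T' h' => CTheory.not_mem_both T' χ h') hinf ⟨Ta, hTa, hχa⟩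

open Classical in
/-- One step of the tree construction, packaged as a function. -/
noncomputable def nextPair (𝒜 : Set (CTheory L)) (ψ : L.Sentence) : L.Sentence × L.Sentence :=
  if h : {T : CTheory L | IsAccPoint 𝒜 T ∧ ψ ∈ T.1}.Infinite then (acc_step 𝒜 ψ h).choose
  else ⟨ψ, ψ⟩

noncomputable def psiSeq (𝒜 : Set (CTheory L)) : ℕ → L.Sentence
  | 0 => ⊤
  | n + 1 => (nextPair 𝒜 (psiSeq 𝒜 n)).1

noncomputable def phiSeq (𝒜 : Set (CTheory L)) (n : ℕ) : L.Sentence :=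
  (nextPair 𝒜 (psiSeq 𝒜 n)).2

lemma psi_inv (hacc : {T : CTheory L | IsAccPoint 𝒜 T}.Infinite) :
    ∀ n, {T : CTheory L | IsAccPoint 𝒜 T ∧ psiSeq 𝒜 n ∈ T.1}.Infinite := by
  intro n
  induction n with
  | zero =>
    have : {T : CTheory L | IsAccPoint 𝒜 T ∧ psiSeq 𝒜 0 ∈ T.1}
        = {T : CTheory L | IsAccPoint 𝒜 T} := by
      ext T; simp [psiSeq, CTheory.mem_top T]
    rw [this]; exact hacc
  | succ n ih =>
    show {T : CTheory L | IsAccPoint 𝒜 T ∧ (nextPair 𝒜 (psiSeq 𝒜 n)).1 ∈ T.1}.Infinite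
    rw [nextPair, dif_pos ih]
    exact (acc_step 𝒜 (psiSeq 𝒜 n) ih).choose_spec.1

lemma chain_props (hacc : {T : CTheory L | IsAccPoint 𝒜 T}.Infinite) (n : ℕ) :
    (∃ T : CTheory L, IsAccPoint 𝒜 T ∧ phiSeq 𝒜 n ∈ T.1) ∧
    (∀ T : CTheory L, psiSeq 𝒜 (n + 1) ∈ T.1 → psiSeq 𝒜 n ∈ T.1) ∧
    (∀ T : CTheory L, phiSeq 𝒜 n ∈ T.1 → psiSeq 𝒜 n ∈ T.1) ∧
    (∀ T : CTheory L, ¬(phiSeq 𝒜 n ∈ T.1 ∧ psiSeq 𝒜 (n + 1) ∈ T.1)) := by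
  have ih := psi_inv hacc n
  have hspec := (acc_step 𝒜 (psiSeq 𝒜 n) ih).choose_spec
  have h1 : psiSeq 𝒜 (n + 1) = (acc_step 𝒜 (psiSeq 𝒜 n) ih).choose.1 := by
    show (nextPair 𝒜 (psiSeq 𝒜 n)).1 = _
    rw [nextPair, dif_pos ih]
  have h2 : phiSeq 𝒜 n = (acc_step 𝒜 (psiSeq 𝒜 n) ih).choose.2 := by
    show (nextPair 𝒜 (psiSeq 𝒜 n)).2 = _
    rw [nextPair, dif_pos ih]
  rw [h1, h2]
  exact ⟨hspec.2.1, hspec.2.2.1, hspec.2.2.2.1, hspec.2.2.2.2⟩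

lemma psi_chain (hacc : {T : CTheory L | IsAccPoint 𝒜 T}.Infinite) :
    ∀ m n : ℕ, m ≤ n → ∀ T : CTheory L, psiSeq 𝒜 n ∈ T.1 → psiSeq 𝒜 m ∈ T.1 := by
  intro m n
  induction n with
  | zero => intro hm T hT; rw [Nat.le_zero.1 hm]; exact hT
  | succ n ih =>
    intro hm T hT
    rcases Nat.lt_or_ge m (n + 1) with h | h
    · exact ih (Nat.lt_succ_iff.1 h) T ((chain_props hacc n).2.1 T hT)
    · rw [Nat.le_antisymm hm h]; exact hT

lemma RSge_two_of_acc_infinite (hacc : {T : CTheory L | IsAccPoint 𝒜 T}.Infinite) :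
    RSge (2 : Ordinal.{w}) 𝒜 := by
  rw [RSge_two]
  refine ⟨phiSeq 𝒜, ?_, ?_⟩
  · have key : ∀ m n, m < n → Inconsistent (phiSeq 𝒜 m) (phiSeq 𝒜 n) := by
      intro m n hmn
      apply inconsistent_of_forall
      rintro T ⟨h1, h2⟩
      have hn : psiSeq 𝒜 n ∈ T.1 := (chain_props hacc n).2.2.1 T h2
      have hm1 : psiSeq 𝒜 (m + 1) ∈ T.1 := psi_chain hacc (m + 1) n hmn T hn
      exact (chain_props hacc m).2.2.2 T ⟨h1, hm1⟩
    intro m n hne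
    rcases hne.lt_or_gt with h | h
    · exact key _ _ h
    · exact inconsistent_symm (key _ _ h)
  · intro k
    obtain ⟨T, hT, hmem⟩ := (chain_props hacc k).1
    exact hT _ hmem

lemma RSge_two_iff_acc_infinite (𝒜 : Set (CTheory L)) :
    RSge (2 : Ordinal.{w}) 𝒜 ↔ {T : CTheory L | IsAccPoint 𝒜 T}.Infinite :=
  ⟨acc_infinite_of_RSge_two, RSge_two_of_acc_infinite⟩

end Aux

/-- Proposition 2.13: (1) `𝒯` is `0`-minimal iff `𝒯` is a singleton;
(2) `𝒯` is `1`-minimal iff `𝒯` is (infinite and) `e`-minimal; (3) `𝒯` is `2`-minimal iff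
`𝒯` is `a`-minimal; (4) for any ordinal `α`, `𝒯` is `α`-minimal iff `RS(𝒯) = α` and
`ds(𝒯) = 1`. -/
theorem alphaMinimal_characterizations (𝒯 : Set (CTheory L)) :
    (AlphaMinimal 𝒯 0 ↔ ∃ T : CTheory L, 𝒯 = {T}) ∧
    (AlphaMinimal 𝒯 1 ↔ (𝒯.Infinite ∧ EMinimal 𝒯)) ∧
    (AlphaMinimal 𝒯 2 ↔ AMinimal 𝒯) ∧
    (∀ α : Ordinal.{w}, AlphaMinimal 𝒯 α ↔ (RSeq 𝒯 α ∧ dsEq 𝒯 α 1)) := by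
  refine ⟨?_, ?_, ?_, ?_⟩
  -- Part 1
  · constructor
    · rintro ⟨⟨h0, _⟩, hcond⟩
      rw [RSge_zero] at h0
      obtain ⟨T, hT⟩ := h0
      refine ⟨T, ?_⟩
      ext T'
      simp only [Set.mem_singleton_iff]
      refine ⟨fun hT' => ?_, fun h => h ▸ hT⟩
      by_contra hne
      have hne' : ¬ (T'.1 = T.1) := fun e => hne (Subtype.ext e)
      obtain ⟨χ, hχ⟩ := not_forall.1 (fun hall => hne' (Set.ext fun χ => hall χ))
      have hboth : ∃ χ : L.Sentence, (nbhd 𝒯 χ).Nonempty ∧ (nbhd 𝒯 χ.not).Nonempty := by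
        rcases Classical.em (χ ∈ T'.1) with h1 | h1
        · have h2 : χ ∉ T.1 := fun h2 => hχ ⟨fun _ => h2, fun _ => h1⟩
          exact ⟨χ, ⟨T', hT', h1⟩, ⟨T, hT, (T.2.2 χ).resolve_left h2⟩⟩
        · have h2 : χ ∈ T.1 := by
            by_contra h2
            exact hχ ⟨fun h => absurd h h1, fun h => absurd h h2⟩
          exact ⟨χ, ⟨T, hT, h2⟩, ⟨T', hT', (T'.2.2 χ).resolve_left h1⟩⟩
      obtain ⟨χ, hc1, hc2⟩ := hboth
      rcases hcond χ with hc | hc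
      · exact hc ((RSge_zero _).2 hc1)
      · exact hc ((RSge_zero _).2 hc2)
    · rintro ⟨T, rfl⟩
      refine ⟨⟨(RSge_zero _).2 ⟨T, rfl⟩, ?_⟩, ?_⟩
      · rw [zero_add, RSge_one]
        exact Set.not_infinite.2 (Set.finite_singleton T)
      · intro φ
        rcases T.2.2 φ with h | h
        · right
          rw [RSge_zero]
          rintro ⟨T', hT', hmem⟩
          rw [Set.mem_singleton_iff] at hT'
          subst hT'
          exact CTheory.not_mem_both T' φ ⟨h, hmem⟩
        · left
          rw [RSge_zero]
          rintro ⟨T', hT', hmem⟩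
          rw [Set.mem_singleton_iff] at hT'
          subst hT'
          exact CTheory.not_mem_both T' φ ⟨hmem, h⟩
  -- Part 2
  · constructor
    · rintro ⟨⟨h1, _⟩, hcond⟩
      rw [RSge_one] at h1
      refine ⟨h1, fun φ => ?_⟩
      rcases hcond φ with h | h
      · left; rw [RSge_one, Set.not_infinite] at h; exact h
      · right; rw [RSge_one, Set.not_infinite] at h; exact h
    · rintro ⟨hinf, hE⟩
      have hcond : ∀ φ : L.Sentence,
          ¬RSge (1 : Ordinal) (nbhd 𝒯 φ) ∨ ¬RSge (1 : Ordinal) (nbhd 𝒯 φ.not) := by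
        intro φ
        rcases hE φ with h | h
        · left; rw [RSge_one, Set.not_infinite]; exact h
        · right; rw [RSge_one, Set.not_infinite]; exact h
      exact ⟨⟨(RSge_one _).2 hinf, not_RSge_succ one_ne_zero hcond⟩, hcond⟩
  -- Part 3
  · constructor
    · rintro ⟨⟨h1, _⟩, hcond⟩
      refine ⟨acc_infinite_of_RSge_two h1, fun φ => ?_⟩
      rcases hcond φ with h | h
      · left; rw [← Set.not_infinite]; exact fun hi => h (RSge_two_of_acc_infinite hi)
      · right; rw [← Set.not_infinite]; exact fun hi => h (RSge_two_of_acc_infinite hi)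
    · rintro ⟨hacc, hA⟩
      have hcond : ∀ φ : L.Sentence,
          ¬RSge (2 : Ordinal) (nbhd 𝒯 φ) ∨ ¬RSge (2 : Ordinal) (nbhd 𝒯 φ.not) := by
        intro φ
        rcases hA φ with h | h
        · left; exact fun h2 => (Set.not_infinite.2 h) (acc_infinite_of_RSge_two h2)
        · right; exact fun h2 => (Set.not_infinite.2 h) (acc_infinite_of_RSge_two h2)
      have h20 : (2 : Ordinal) ≠ 0 := two_ne_zero
      exact ⟨⟨RSge_two_of_acc_infinite hacc, not_RSge_succ h20 hcond⟩, hcond⟩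
  -- Part 4
  · intro α
    constructor
    · rintro ⟨hRS, hcond⟩
      refine ⟨hRS, ⟨⟨fun _ => (⊤ : L.Sentence),
        fun i j hij => absurd (Subsingleton.elim i j) hij,
        fun _ => by rw [nbhd_top]; exact hRS⟩, ?_⟩⟩
      intro m hm
      by_contra hle
      push_neg at hle
      obtain ⟨φ, hpair, hRSi⟩ := hm
      have h01 : (⟨0, by omega⟩ : Fin m) ≠ ⟨1, by omega⟩ := by
        simp [Fin.ext_iff]
      have hinc := hpair _ _ h01
      rcases hcond (φ ⟨0, by omega⟩) with h | h
      · exact h (hRSi ⟨0, by omega⟩).1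
      · refine h (RSge_mono α ?_ (hRSi ⟨1, by omega⟩).1)
        intro T hT
        exact ⟨hT.1, mem_not_of_inconsistent hinc T hT.2⟩
    · rintro ⟨hRS, hds⟩
      refine ⟨hRS, fun φ => ?_⟩
      by_contra hcon
      push_neg at hcon
      obtain ⟨hga, hgb⟩ := hcon
      have hne : ∀ ψ : L.Sentence, ¬ RSge (α + 1) (nbhd 𝒯 ψ) :=
        fun ψ h => hRS.2 (RSge_mono _ (nbhd_subset 𝒯 ψ) h)
      have h2 : (2 : ℕ) ∈ {m : ℕ | ∃ φf : Fin m → L.Sentence,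
          (∀ i j : Fin m, i ≠ j → Inconsistent (φf i) (φf j)) ∧
          ∀ i : Fin m, RSeq (nbhd 𝒯 (φf i)) α} := by
        refine ⟨![φ, φ.not], fun i j hij => ?_, fun i => ?_⟩
        · fin_cases i <;> fin_cases j <;>
            simp only [Matrix.cons_val_zero, Matrix.cons_val_one, Matrix.head_cons] <;>
            first
              | exact absurd rfl hij
              | exact inconsistent_not_self φ
              | exact inconsistent_symm (inconsistent_not_self φ)
        · fin_cases i <;>
            simp only [Matrix.cons_val_zero, Matrix.cons_val_one, Matrix.head_cons]
          · exact ⟨hga, hne φ⟩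
          · exact ⟨hgb, hne φ.not⟩
      have := hds.2 h2
      omega
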